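/- Let a group G act without inversions on a tree T and let H be a subgroup of G containing a hyperbolic element. Then every vertex of the quotient graph T_H/H of degree 1 is H-non-degenerate; that is, if v is a vertex of the minimal H-invariant subtree T_H such that there is exactly one H-orbit of ordered pairs (u,w) of adjacent vertices of T_H with u ∈ H·v, then H_v ≠ H_e for every edge e of T_H incident to v. -/

import Mathlib

open MulAction Pointwise

namespace Paper

variable {G V : Type*} [Group G] [MulAction G V]

/-- An element is hyperbolic if it fixes no vertex of the tree `T`. -/
def IsHyperbolic (_T : SimpleGraph V) (g : G) : Prop := ∀ v : V, g • v ≠ v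

/-- The number of orbits of the action of the group `H` on the subset `S`. -/
noncomputable def orbCount (H : Type*) [Group H] {α : Type*} [MulAction H α]
    (S : Set α) : ℕ :=
  Nat.card (Quotient (Setoid.comap (Subtype.val : S → α) (MulAction.orbitRel H α)))

/-- The action of the group `H` on the subset `S` has finitely many orbits. -/
def QuotFinite (H : Type*) [Group H] {α : Type*} [MulAction H α] (S : Set α) : Prop :=
  Finite (Quotient (Setoid.comap (Subtype.val : S → α) (MulAction.orbitRel H α)))

/-- Ordered edges of the induced subgraph of `T` on `S`. -/
def orderedEdges (T : SimpleGraph V) (S : Set V) : Set (V × V) :=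
  {p : V × V | p.1 ∈ S ∧ p.2 ∈ S ∧ T.Adj p.1 p.2}

/-- `S` is the vertex set of a nonempty `H`-invariant subtree of `T`. -/
def InvSubtree (T : SimpleGraph V) (H : Subgroup G) (S : Set V) : Prop :=
  (∀ h ∈ H, ∀ v ∈ S, h • v ∈ S) ∧ (T.induce S).Connected

/-- The (vertex set of the) minimal `H`-invariant subtree `T_H` of `T`: the
intersection of all nonempty `H`-invariant subtrees.  (When `H` contains a
hyperbolic element this is the unique minimal nonempty `H`-invariant subtree.) -/
def minSubtree (T : SimpleGraph V) (H : Subgroup G) : Set V :=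
  ⋂₀ {S : Set V | InvSubtree T H S}

/-- `v` is `H`-degenerate with respect to the subtree with vertex set `S`:
`H_v = H_e` for some edge `e` of `S` incident to `v`. -/
def DegenIn (T : SimpleGraph V) (H : Subgroup G) (S : Set V) (v : V) : Prop :=
  ∃ w ∈ S, T.Adj v w ∧ H ⊓ MulAction.stabilizer G v ≤ MulAction.stabilizer G w

/-- The `H`-nondegenerate vertices of the subtree with vertex set `S`. -/
def ndegSet (T : SimpleGraph V) (H : Subgroup G) (S : Set V) : Set V :=
  {v ∈ S | ¬ DegenIn T H S v}

/-- The star of `[v]_H` in the quotient graph `S/H`, as the set of ordered edges of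
`S` with initial vertex in the `H`-orbit of `v` (an edge of the quotient in the star
of `[v]_H` is an `H`-orbit of such pairs). -/
def starSet (T : SimpleGraph V) (H : Subgroup G) (S : Set V) (v : V) : Set (V × V) :=
  {p : V × V | p.1 ∈ S ∧ p.2 ∈ S ∧ T.Adj p.1 p.2 ∧ p.1 ∈ MulAction.orbit H v}

/-- The degree of the vertex `[v]_H` in the quotient graph `S/H`: the number of
`H`-orbits of ordered pairs `(u, w)` of adjacent vertices of `S` with `u ∈ H • v`. -/
noncomputable def quotDegree (T : SimpleGraph V) (H : Subgroup G) (S : Set V) (v : V) : ℕ :=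
  orbCount H (starSet T H S v)

/-- The rank of the quotient graph `T_H/H`, i.e. #edges − #vertices + 1
(each unordered edge corresponds to two `H`-orbits of ordered edges). -/
noncomputable def quotRank (T : SimpleGraph V) (H : Subgroup G) : ℕ :=
  orbCount H (orderedEdges T (minSubtree T H)) / 2 + 1 - orbCount H (minSubtree T H)

open Classical in
/-- The complexity `C_T(H)`: if `H` contains a hyperbolic element it is
`r(T_H/H) + #(H-orbits of H-nondegenerate vertices of T_H)`, and `1` otherwise. -/
noncomputable def complexity (T : SimpleGraph V) (H : Subgroup G) : ℕ :=
  if ∃ h ∈ H, IsHyperbolic T h then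
    quotRank T H + orbCount H (ndegSet T H (minSubtree T H))
  else 1

/-- The reduced complexity `C̄_T(H) = max {C_T(H) − 1, 0}`. -/
noncomputable def rComplexity (T : SimpleGraph V) (H : Subgroup G) : ℕ :=
  complexity T H - 1

/-- `H` is tame: either `H` fixes a vertex, or `H` contains a hyperbolic element
and the quotient graph `T_H/H` is finite. -/
def Tame (T : SimpleGraph V) (H : Subgroup G) : Prop :=
  (∃ v : V, ∀ h ∈ H, h • v = v) ∨
    ((∃ h ∈ H, IsHyperbolic T h) ∧ QuotFinite H (minSubtree T H) ∧
      QuotFinite H (orderedEdges T (minSubtree T H)))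

end Paper
/-- Every vertex of valence one of the quotient graph `T_H/H` is `H`-nondegenerate
(by minimality of `T_H`). -/
theorem nondegenerate_of_degree_one
    {V G : Type*} [Group G] [MulAction G V]
    (T : SimpleGraph V) (hconn : T.Connected) (hacyc : T.IsAcyclic)
    (hadj : ∀ (g : G) (u w : V), T.Adj u w → T.Adj (g • u) (g • w))
    (hninv : ∀ (g : G) (u w : V), T.Adj u w → ¬(g • u = w ∧ g • w = u))
    (H : Subgroup G) (hhyp : ∃ h ∈ H, Paper.IsHyperbolic T h) :
    ∀ v ∈ Paper.minSubtree T H,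
      Paper.quotDegree T H (Paper.minSubtree T H) v = 1 →
      ¬ Paper.DegenIn T H (Paper.minSubtree T H) v := by
  classical
  intro v hv hdeg1 hdeg
  obtain ⟨w, hwS, hvw, hle⟩ := hdeg
  set S : Set V := Paper.minSubtree T H with hSdef
  set O : Set V := MulAction.orbit H v with hOdef
  -- S is H-invariant
  have hSinv : ∀ h ∈ H, ∀ x ∈ S, h • x ∈ S := by
    intro h hh x hx S₀ hS₀
    exact hS₀.1 h hh x (hx S₀ hS₀)
  have hvS : v ∈ S := hv
  have hvO : v ∈ O := MulAction.mem_orbit_self v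
  -- the quotient of the star is a subsingleton
  have hsub : Subsingleton (Quotient (Setoid.comap
      (Subtype.val : (Paper.starSet T H S v) → V × V) (MulAction.orbitRel H (V × V)))) := by
    rw [Paper.quotDegree, Paper.orbCount] at hdeg1
    exact (Nat.card_eq_one_iff_unique.mp hdeg1).1
  have hbase : ((v, w) : V × V) ∈ Paper.starSet T H S v :=
    ⟨hvS, hwS, hvw, MulAction.mem_orbit_self v⟩
  -- every neighbor in S of g • v equals g • w
  have huniq : ∀ (g : H) (u : V), u ∈ S → T.Adj ((g : G) • v) u → u = (g : G) • w := by
    intro g u huS hadjgu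
    have hgvS : (g : G) • v ∈ S := hSinv (g : G) g.2 v hvS
    have hmem : (((g : G) • v, u) : V × V) ∈ Paper.starSet T H S v :=
      ⟨hgvS, huS, hadjgu, ⟨g, rfl⟩⟩
    have heq := @Subsingleton.elim _ hsub
      (Quotient.mk _ (⟨_, hmem⟩ : ↥(Paper.starSet T H S v)))
      (Quotient.mk _ (⟨_, hbase⟩ : ↥(Paper.starSet T H S v)))
    have hrel : (((g : G) • v, u) : V × V) ∈ MulAction.orbit H ((v, w) : V × V) :=
      Quotient.exact heq
    obtain ⟨h, hh⟩ := hrel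
    have hh1 : (h : G) • v = (g : G) • v := congrArg Prod.fst hh
    have hh2 : (h : G) • w = u := congrArg Prod.snd hh
    have hkH : (g : G)⁻¹ * (h : G) ∈ H := mul_mem (inv_mem g.2) h.2
    have hkv : ((g : G)⁻¹ * (h : G)) • v = v := by
      rw [mul_smul, hh1, inv_smul_smul]
    have hkw : ((g : G)⁻¹ * (h : G)) • w = w := hle ⟨hkH, hkv⟩
    calc u = (h : G) • w := hh2.symm
    _ = ((g : G) * ((g : G)⁻¹ * (h : G))) • w := by group
    _ = (g : G) • w := by rw [mul_smul, hkw]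
  -- w is not in the orbit of v
  have hwO : w ∉ O := by
    rintro ⟨g, hg⟩
    have hg' : (g : G) • v = w := hg
    have h2 : v = (g : G) • w := huniq g v hvS (by rw [hg']; exact hvw.symm)
    exact hninv (g : G) v w hvw ⟨hg', h2.symm⟩
  -- surgery: walks in S can avoid the orbit O
  have surgery : ∀ n : ℕ, ∀ x y : V, ∀ p : T.Walk x y, p.length ≤ n →
      (∀ z ∈ p.support, z ∈ S) → x ∉ O → y ∉ O →
      ∃ q : T.Walk x y, ∀ z ∈ q.support, z ∈ S \ O := by
    intro n
    induction n with
    | zero =>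
      intro x y p hlen hsupp hx hy
      cases p with
      | nil => exact ⟨.nil, by simp; exact ⟨hsupp x (by simp), hx⟩⟩
      | cons h q => simp at hlen
    | succ n ih =>
      intro x y p hlen hsupp hx hy
      cases p with
      | nil => exact ⟨.nil, by simp; exact ⟨hsupp x (by simp), hx⟩⟩
      | @cons _ z _ hxz p' =>
        by_cases hzO : z ∈ O
        · obtain ⟨g, hg⟩ := hzO
          have hg' : (g : G) • v = z := hg
          have hxw : x = (g : G) • w :=
            huniq g x (hsupp x (by simp)) (by rw [hg']; exact hxz.symm)
          cases p' with
          | nil => exact absurd ⟨g, hg⟩ hy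
          | @cons _ z' _ hzz' p'' =>
            have hz' : z' = (g : G) • w :=
              huniq g z' (hsupp z' (by simp)) (by rw [hg']; exact hzz')
            have hz'x : z' = x := hz'.trans hxw.symm
            refine ih x y (p''.copy hz'x rfl) ?_ ?_ hx hy
            · rw [SimpleGraph.Walk.length_copy]
              simp only [SimpleGraph.Walk.length_cons] at hlen
              omega
            · intro t ht
              rw [SimpleGraph.Walk.support_copy] at ht
              exact hsupp t (by simp [ht])
        · have hzS : z ∈ S := hsupp z (by simp)
          obtain ⟨q, hq⟩ := ih z y p'
            (by simp only [SimpleGraph.Walk.length_cons] at hlen; omega)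
            (fun t ht => hsupp t (by simp [ht])) hzO hy
          refine ⟨.cons hxz q, ?_⟩
          intro t ht
          rw [SimpleGraph.Walk.support_cons, List.mem_cons] at ht
          rcases ht with rfl | ht
          · exact ⟨hsupp t (by simp), hx⟩
          · exact hq t ht
  -- between any two vertices of S there is a walk inside S
  have pathInS : ∀ x y : V, x ∈ S → y ∈ S → ∃ p : T.Walk x y, ∀ z ∈ p.support, z ∈ S := by
    intro x y hx hy
    obtain ⟨p0⟩ := hconn.preconnected x y
    refine ⟨p0.bypass, ?_⟩
    intro z hz
    intro S₀ hS₀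
    have hxS₀ : x ∈ S₀ := hx S₀ hS₀
    have hyS₀ : y ∈ S₀ := hy S₀ hS₀
    obtain ⟨q⟩ := hS₀.2.preconnected ⟨x, hxS₀⟩ ⟨y, hyS₀⟩
    let q' : T.Walk x y := q.map (SimpleGraph.Embedding.induce S₀).toHom
    have hq'supp : ∀ t ∈ q'.support, t ∈ S₀ := by
      intro t ht
      rw [show q'.support = _ from SimpleGraph.Walk.support_map _ _] at ht
      obtain ⟨a, _, rfl⟩ := List.mem_map.mp ht
      exact a.2
    have hpatheq : p0.bypass = q'.bypass :=
      congrArg Subtype.val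
        (hacyc.path_unique ⟨p0.bypass, p0.bypass_isPath⟩ ⟨q'.bypass, q'.bypass_isPath⟩)
    rw [hpatheq] at hz
    exact hq'supp z (q'.support_bypass_subset hz)
  -- lifting a walk with support in S \ O to the induced graph
  have lift : ∀ (x y : V) (p : T.Walk x y), (∀ z ∈ p.support, z ∈ S \ O) →
      ∀ (hx : x ∈ S \ O) (hy : y ∈ S \ O),
      (T.induce (S \ O)).Reachable ⟨x, hx⟩ ⟨y, hy⟩ := by
    intro x y p
    induction p with
    | nil => intro _ hx hy; exact SimpleGraph.Reachable.refl _
    | @cons a b c h p ih =>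
      intro hs hx hy
      have hb : b ∈ S \ O := hs b (by simp)
      exact (SimpleGraph.Adj.reachable (by exact h :
        (T.induce (S \ O)).Adj ⟨a, hx⟩ ⟨b, hb⟩)).trans (ih (fun t ht => hs t (by simp [ht])) hb hy)
  -- S \ O is an invariant subtree
  have hS' : Paper.InvSubtree T H (S \ O) := by
    constructor
    · intro h hh x hx
      refine ⟨hSinv h hh x hx.1, fun hmem => hx.2 ?_⟩
      obtain ⟨g, hg⟩ := hmem
      refine ⟨(⟨h, hh⟩ : H)⁻¹ * g, ?_⟩
      have hg' : (g : G) • v = h • x := hg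
      show (((⟨h, hh⟩ : H)⁻¹ * g : H) : G) • v = x
      push_cast
      rw [mul_smul, hg', inv_smul_smul]
    · haveI : Nonempty ↥(S \ O) := ⟨⟨w, hwS, hwO⟩⟩
      refine SimpleGraph.Connected.mk ?_
      · rintro ⟨a, haS, haO⟩ ⟨b, hbS, hbO⟩
        obtain ⟨p, hp⟩ := pathInS a b haS hbS
        obtain ⟨q, hq⟩ := surgery p.length a b p le_rfl hp haO hbO
        exact lift a b q hq ⟨haS, haO⟩ ⟨hbS, hbO⟩
  have : v ∈ S \ O := Set.sInter_subset_of_mem hS' hv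
  exact this.2 hvO
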